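/- Let ℓ ≤ k, let F = F⁺ ∧ F⁻ be an (ℓ,k)-CNF formula, and let G be its k-CNFification. Then for every variable x, occ_G(x)·occ_G(x̄) ≤ max{4^{k-ℓ}, 2^{k-ℓ}·|F⁺|·|F⁻|}. -/
import Mathlib


open scoped Classical

abbrev Var := ℕ
abbrev Lit := Var × Bool
abbrev Clause := Finset Lit
abbrev CNF := Finset Clause

/-- A clause is valid if no variable occurs both positively and negatively. -/
def ClauseValid (C : Clause) : Prop :=
  ∀ x : Var, ¬(((x, true) ∈ C) ∧ ((x, false) ∈ C))

/-- Assignment `α` satisfies clause `C`. -/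
def SatC (α : Var → Bool) (C : Clause) : Prop := ∃ l ∈ C, α l.1 = l.2

/-- A CNF formula is satisfiable. -/
def Satisfiable (F : CNF) : Prop := ∃ α : Var → Bool, ∀ C ∈ F, SatC α C

/-- Two clauses conflict: some variable positive in one, negative in the other. -/
def Conflict (C D : Clause) : Prop :=
  ∃ x : Var, (((x, true) ∈ C) ∧ ((x, false) ∈ D)) ∨ (((x, false) ∈ C) ∧ ((x, true) ∈ D))

/-- Number of clauses of `F` containing the literal `u`. -/
noncomputable def occ (F : CNF) (u : Lit) : ℕ := (F.filter (fun C => u ∈ C)).card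

/-- Number of unordered conflicting pairs of distinct clauses. -/
noncomputable def numConflicts (F : CNF) : ℕ :=
  ((F ×ˢ F).filter (fun p => p.1 ≠ p.2 ∧ Conflict p.1 p.2)).card / 2

/-- `F` is a `k`-CNF formula. -/
def IsKCNF (k : ℕ) (F : CNF) : Prop := ∀ C ∈ F, C.card = k ∧ ClauseValid C

/-- All clauses of `Fp` have exactly `l` literals, all positive. -/
def PosClauses (l : ℕ) (Fp : CNF) : Prop :=
  ∀ C ∈ Fp, C.card = l ∧ ∀ u ∈ C, u.2 = true

/-- All clauses of `Fn` have exactly `k` literals, all negative. -/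
def NegClauses (k : ℕ) (Fn : CNF) : Prop :=
  ∀ C ∈ Fn, C.card = k ∧ ∀ u ∈ C, u.2 = false

/-- The variables occurring in `F`. -/
noncomputable def varsOf (F : CNF) : Finset Var := F.biUnion (fun C => C.image Prod.fst)

/-- All `2^|V|` clauses obtained by disjoining `C` with a full sign pattern on `V`. -/
noncomputable def expansions (C : Clause) (V : Finset Var) : Finset Clause :=
  (Finset.univ : Finset ({x // x ∈ V} → Bool)).image
    (fun s => C ∪ V.attach.image (fun x => (x.1, s x)))

/-- The complete `k`-CNF formula over the variables `0, …, k-1`. -/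
noncomputable def completeCNF (k : ℕ) : CNF := expansions ∅ (Finset.range k)

/-- `G` is a `k`-CNFification of `F`: each clause `C` of `F` is replaced by the
`2^(k - |C|)` expansions of `C` over `k - |C|` fresh variables, fresh per clause. -/
noncomputable def IsKCNFification (k : ℕ) (F G : CNF) : Prop :=
  ∃ Y : Clause → Finset Var,
    (∀ C ∈ F, Disjoint (Y C) (varsOf F)) ∧
    (∀ C ∈ F, ∀ D ∈ F, C ≠ D → Disjoint (Y C) (Y D)) ∧
    (∀ C ∈ F, (Y C).card = k - C.card) ∧
    G = F.biUnion (fun C => expansions C (Y C))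

lemma my_sum_union_le {α : Type*} [DecidableEq α] (s t : Finset α) (f : α → ℕ) :
    ∑ x ∈ s ∪ t, f x ≤ ∑ x ∈ s, f x + ∑ x ∈ t, f x := by
  rw [← Finset.sum_union_inter]
  exact Nat.le_add_right _ _

lemma card_expansions_le (C : Clause) (V : Finset Var) :
    (expansions C V).card ≤ 2 ^ V.card := by
  calc (expansions C V).card ≤ (Finset.univ : Finset ({x // x ∈ V} → Bool)).card :=
        Finset.card_image_le
    _ = 2 ^ V.card := by simp

lemma mem_of_mem_expansions {C : Clause} {V : Finset Var} {D : Clause} {u : Lit}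
    (hD : D ∈ expansions C V) (hu : u ∈ D) : u ∈ C ∨ u.1 ∈ V := by
  obtain ⟨s, -, rfl⟩ := Finset.mem_image.mp hD
  rcases Finset.mem_union.mp hu with h | h
  · exact Or.inl h
  · obtain ⟨x, hx, hxu⟩ := Finset.mem_image.mp h
    right
    rw [← hxu]
    exact x.2

lemma filter_expansions_eq_empty {C : Clause} {V : Finset Var} {u : Lit}
    (h1 : u ∉ C) (h2 : u.1 ∉ V) :
    (expansions C V).filter (fun D => u ∈ D) = ∅ := by
  rw [Finset.filter_eq_empty_iff]
  intro D hD hu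
  rcases mem_of_mem_expansions hD hu with h | h
  exacts [h1 h, h2 h]

lemma var_mem_varsOf {F : CNF} {C : Clause} {u : Lit} (hC : C ∈ F) (hu : u ∈ C) :
    u.1 ∈ varsOf F :=
  Finset.mem_biUnion.mpr ⟨C, hC, Finset.mem_image.mpr ⟨u, hu, rfl⟩⟩

lemma occ_biUnion_le (F : CNF) (g : Clause → CNF) (u : Lit) :
    occ (F.biUnion g) u ≤ ∑ C ∈ F, ((g C).filter (fun D => u ∈ D)).card := by
  unfold occ
  rw [Finset.filter_biUnion]
  exact Finset.card_biUnion_le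

/-- The `k`-CNFification `G` of an `(ℓ,k)`-CNF formula satisfies, for every variable `x`,
`occ_G(x) · occ_G(x̄) ≤ max{4^{k-ℓ}, 2^{k-ℓ}|F⁺||F⁻|}`. -/
theorem stmt6 (l k : ℕ) (hlk : l ≤ k) (Fp Fn G : CNF)
    (hp : PosClauses l Fp) (hn : NegClauses k Fn)
    (hG : IsKCNFification k (Fp ∪ Fn) G) :
    ∀ x : Var, occ G (x, true) * occ G (x, false) ≤
      max (4 ^ (k - l)) (2 ^ (k - l) * Fp.card * Fn.card) := by
  obtain ⟨Y, hdisj, hpair, hcard, rfl⟩ := hG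
  intro x
  by_cases hx : ∃ C ∈ Fp ∪ Fn, x ∈ Y C
  · -- x is a fresh variable of Y C₀
    obtain ⟨C₀, hC₀, hxY⟩ := hx
    have hxv : x ∉ varsOf (Fp ∪ Fn) :=
      fun h => Finset.disjoint_left.mp (hdisj C₀ hC₀) hxY h
    have key : ∀ b, occ ((Fp ∪ Fn).biUnion fun C => expansions C (Y C)) (x, b)
        ≤ 2 ^ (k - l) := by
      intro b
      refine (occ_biUnion_le _ _ _).trans ?_
      have hsum : ∑ C ∈ Fp ∪ Fn, ((expansions C (Y C)).filter (fun D => (x, b) ∈ D)).card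
          = ((expansions C₀ (Y C₀)).filter (fun D => (x, b) ∈ D)).card := by
        refine Finset.sum_eq_single C₀ (fun C hC hne => ?_) (fun h => absurd hC₀ h)
        rw [filter_expansions_eq_empty (fun hu => hxv (var_mem_varsOf hC hu))
          (fun hxY' => Finset.disjoint_left.mp (hpair C hC C₀ hC₀ hne) hxY' hxY),
          Finset.card_empty]
      rw [hsum]
      refine (Finset.card_filter_le _ _).trans ((card_expansions_le _ _).trans ?_)
      rw [hcard C₀ hC₀]
      refine Nat.pow_le_pow_right (by norm_num) ?_
      have hlc : l ≤ C₀.card := by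
        rcases Finset.mem_union.mp hC₀ with h | h
        · exact (hp C₀ h).1.ge
        · rw [(hn C₀ h).1]; exact hlk
      omega
    calc occ ((Fp ∪ Fn).biUnion fun C => expansions C (Y C)) (x, true) *
          occ ((Fp ∪ Fn).biUnion fun C => expansions C (Y C)) (x, false)
        ≤ 2 ^ (k - l) * 2 ^ (k - l) := Nat.mul_le_mul (key true) (key false)
      _ = 4 ^ (k - l) := by rw [← mul_pow]; norm_num
      _ ≤ _ := le_max_left _ _
  · push_neg at hx
    have htrue : occ ((Fp ∪ Fn).biUnion fun C => expansions C (Y C)) (x, true)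
        ≤ 2 ^ (k - l) * Fp.card := by
      refine (occ_biUnion_le _ _ _).trans ((my_sum_union_le _ _ _).trans ?_)
      have h2 : ∑ C ∈ Fn, ((expansions C (Y C)).filter (fun D => (x, true) ∈ D)).card = 0 := by
        refine Finset.sum_eq_zero fun C hC => ?_
        rw [filter_expansions_eq_empty (fun hu => by simpa using (hn C hC).2 _ hu)
          (hx C (Finset.mem_union_right _ hC)), Finset.card_empty]
      rw [h2, add_zero]
      calc ∑ C ∈ Fp, ((expansions C (Y C)).filter (fun D => (x, true) ∈ D)).card
          ≤ ∑ _C ∈ Fp, 2 ^ (k - l) := by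
            refine Finset.sum_le_sum fun C hC => ?_
            refine (Finset.card_filter_le _ _).trans ((card_expansions_le _ _).trans ?_)
            rw [hcard C (Finset.mem_union_left _ hC), (hp C hC).1]
        _ = 2 ^ (k - l) * Fp.card := by rw [Finset.sum_const, smul_eq_mul, mul_comm]
    have hfalse : occ ((Fp ∪ Fn).biUnion fun C => expansions C (Y C)) (x, false)
        ≤ Fn.card := by
      refine (occ_biUnion_le _ _ _).trans ((my_sum_union_le _ _ _).trans ?_)
      have h1 : ∑ C ∈ Fp, ((expansions C (Y C)).filter (fun D => (x, false) ∈ D)).card = 0 := by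
        refine Finset.sum_eq_zero fun C hC => ?_
        rw [filter_expansions_eq_empty (fun hu => by simpa using (hp C hC).2 _ hu)
          (hx C (Finset.mem_union_left _ hC)), Finset.card_empty]
      rw [h1, zero_add]
      calc ∑ C ∈ Fn, ((expansions C (Y C)).filter (fun D => (x, false) ∈ D)).card
          ≤ ∑ _C ∈ Fn, 1 := by
            refine Finset.sum_le_sum fun C hC => ?_
            refine (Finset.card_filter_le _ _).trans ((card_expansions_le _ _).trans ?_)
            rw [hcard C (Finset.mem_union_right _ hC), (hn C hC).1]
            simp
        _ = Fn.card := by simp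
    calc occ ((Fp ∪ Fn).biUnion fun C => expansions C (Y C)) (x, true) *
          occ ((Fp ∪ Fn).biUnion fun C => expansions C (Y C)) (x, false)
        ≤ 2 ^ (k - l) * Fp.card * Fn.card := Nat.mul_le_mul htrue hfalse
      _ ≤ _ := le_max_right _ _
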